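/- Scattering interval property: let X ⊆ ℕ be infinite, α an ordinal in the notation system, and let S(α,X) = {a_0 < a_1 < a_2 < ...} be the α-scattering of X. Then: (1) for each β ≤ α and each i, if |β| ≤ a_i then there exists a set s of consecutive elements of X contained in the open interval (a_i, a_{i+1}) with α[s] = β; (2) for each γ ≤ β ≤ α and each i, if |β| ≤ a_i and |γ| ≤ a_i, then there exists a set s of consecutive elements of X in (a_i, a_{i+1}) with β[s] = γ. -/

import Mathlib

open Ordinal

/-- `t` (as an increasing sequence) is `α`-large. -/
def LargeL (F : Ordinal → ℕ → Ordinal) (α : Ordinal) (t : List ℕ) : Prop :=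
  t.foldl F α = 0

/-- `t` is exactly `α`-large (`α`-size). -/
def SizeL (F : Ordinal → ℕ → Ordinal) (α : Ordinal) (t : List ℕ) : Prop :=
  LargeL F α t ∧ (t ≠ [] → ¬ LargeL F α t.dropLast)

/-- The system of fundamental sequences `F` is nested. -/
def Nested (F : Ordinal → ℕ → Ordinal) : Prop :=
  ∀ (γ β : Ordinal) (n : ℕ), 1 < n → γ < β → ¬ (F β n < γ ∧ F γ n < F β n)

lemma take_drop_map_range {A : Type*} (f : ℕ → A) (L k n : ℕ) (h : k + n ≤ L) :
    (((List.range L).map f).drop k).take n = (List.range n).map (fun m => f (k + m)) := by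
  apply List.ext_getElem
  · simp; omega
  · intro i h1 h2
    simp

/-- Scattering interval property.  Let `eX` enumerate the infinite set `X` in increasing
order and let `idx` pick out the indices of the `α`-scattering `S(α,X)`, i.e.
`a_i = eX (idx i)`, where between `a_i` and `a_{i+1}` one skips three elements of `X`
and then an `α`-size block of consecutive elements of `X`.  Then: (1) for `β ≤ α` and
any `i` with `|β| ≤ a_i` there is a set of consecutive elements of `X` inside the
interval `(a_i, a_{i+1})` sent by `α[·]` to `β`; (2) for `γ ≤ β ≤ α` and `i` with
`|β|, |γ| ≤ a_i`, there is such a set sent by `β[·]` to `γ`. -/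
theorem scattering_interval_property
    (F : Ordinal → ℕ → Ordinal)
    (h0 : ∀ n : ℕ, F 0 n = 0)
    (hsucc : ∀ (α : Ordinal) (n : ℕ), F (α + 1) n = α)
    (hself : ∀ (α : Ordinal) (n : ℕ), α ≠ 0 → F α n < α)
    (hnested : Nested F)
    (Λ : Ordinal) (Nrm : Ordinal → ℕ)
    (hNrm : ∀ β δ : Ordinal, β < δ → δ ≤ Λ → ∀ s : List ℕ,
      s.foldl F δ ≤ β → (∀ x ∈ s, Nrm β ≤ x) →
        ∃ t : List ℕ, t <+: s ∧ t.foldl F δ = β)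
    (X : Set ℕ) (eX : ℕ → ℕ) (heX : StrictMono eX) (hrange : Set.range eX = X)
    (α : Ordinal) (hα : α ≤ Λ)
    (idx : ℕ → ℕ) (hidx0 : idx 0 = 0)
    (hstep : ∀ i : ℕ, ∃ L : ℕ, idx (i + 1) = idx i + 4 + L ∧
      SizeL F α ((List.range L).map fun m => eX (idx i + 4 + m))) :
    (∀ β : Ordinal, β ≤ α → ∀ i : ℕ, Nrm β ≤ eX (idx i) →
      ∃ j L : ℕ,
        (∀ m < L, eX (idx i) < eX (j + m) ∧ eX (j + m) < eX (idx (i + 1))) ∧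
        ((List.range L).map fun m => eX (j + m)).foldl F α = β) ∧
    (∀ γ β : Ordinal, γ ≤ β → β ≤ α → ∀ i : ℕ,
      Nrm β ≤ eX (idx i) → Nrm γ ≤ eX (idx i) →
      ∃ j L : ℕ,
        (∀ m < L, eX (idx i) < eX (j + m) ∧ eX (j + m) < eX (idx (i + 1))) ∧
        ((List.range L).map fun m => eX (j + m)).foldl F β = γ) := by
  -- key: for β ≤ α with norm bound, get k ≤ L with prefix foldl = β
  have key : ∀ β : Ordinal, β ≤ α → ∀ i L : ℕ,
      SizeL F α ((List.range L).map fun m => eX (idx i + 4 + m)) →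
      Nrm β ≤ eX (idx i) →
      ∃ k ≤ L, ((List.range k).map fun m => eX (idx i + 4 + m)).foldl F α = β := by
    intro β hβ i L hsz hnorm
    rcases eq_or_lt_of_le hβ with heq | hlt
    · exact ⟨0, Nat.zero_le _, by simp [heq]⟩
    · have hle : ((List.range L).map fun m => eX (idx i + 4 + m)).foldl F α ≤ β := by
        rw [hsz.1]; exact zero_le
      have hmin : ∀ x ∈ (List.range L).map fun m => eX (idx i + 4 + m), Nrm β ≤ x := by
        intro x hx
        simp only [List.mem_map, List.mem_range] at hx
        obtain ⟨m, hm, rfl⟩ := hx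
        exact hnorm.trans (heX (by omega)).le
      obtain ⟨t, hpre, hfold⟩ := hNrm β α hlt hα _ hle hmin
      have hk : t.length ≤ L := by simpa using hpre.length_le
      have ht : t = (List.range t.length).map fun m => eX (idx i + 4 + m) := by
        conv_lhs => rw [List.prefix_iff_eq_take.mp hpre]
        rw [← List.map_take, List.take_range, Nat.min_eq_left hk]
      rw [ht] at hfold
      exact ⟨t.length, hk, hfold⟩
  constructor
  · intro β hβ i hnorm
    obtain ⟨L, hL, hsz⟩ := hstep i
    obtain ⟨k, hkL, hfold⟩ := key β hβ i L hsz hnorm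
    refine ⟨idx i + 4, k, fun m hm => ⟨heX (by omega), ?_⟩, hfold⟩
    rw [hL]; exact heX (by omega)
  · intro γ β hγβ hβα i hnβ hnγ
    rcases eq_or_lt_of_le hγβ with heq | hlt
    · exact ⟨0, 0, by simp, by simp [heq]⟩
    obtain ⟨L, hL, hsz⟩ := hstep i
    obtain ⟨k, hkL, hfold⟩ := key β hβα i L hsz hnβ
    set s : List ℕ := (List.range L).map fun m => eX (idx i + 4 + m) with hs
    have hsplit : (s.drop k).foldl F β = 0 := by
      have h1 : (s.take k ++ s.drop k).foldl F α = 0 := by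
        rw [List.take_append_drop]; exact hsz.1
      rw [List.foldl_append] at h1
      have htk : s.take k = (List.range k).map fun m => eX (idx i + 4 + m) := by
        rw [hs, ← List.map_take, List.take_range, Nat.min_eq_left hkL]
      rwa [htk, hfold] at h1
    have hmin : ∀ x ∈ s.drop k, Nrm γ ≤ x := by
      intro x hx
      have hx' : x ∈ s := List.drop_subset k s hx
      simp only [hs, List.mem_map, List.mem_range] at hx'
      obtain ⟨m, hm, rfl⟩ := hx'
      exact hnγ.trans (heX (by omega)).le
    obtain ⟨t, hpre, hfoldt⟩ := hNrm γ β hlt (hβα.trans hα) (s.drop k)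
      (by rw [hsplit]; exact zero_le) hmin
    have hn : t.length ≤ L - k := by
      have := hpre.length_le
      simpa [hs] using this
    have ht : t = (List.range t.length).map fun m => eX (idx i + 4 + k + m) := by
      conv_lhs => rw [List.prefix_iff_eq_take.mp hpre]
      rw [hs, take_drop_map_range _ L k t.length (by omega)]
      simp [Nat.add_assoc]
    rw [ht] at hfoldt
    refine ⟨idx i + 4 + k, t.length, fun m hm => ⟨heX (by omega), ?_⟩, hfoldt⟩
    rw [hL]; exact heX (by omega)
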